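/- Let (X,S) be an association scheme, H ⊆ T closed subsets with T strongly normal in S, such that (i) sH = sT for each s ∈ S \ T and (ii) tH = {t} for each t ∈ T \ H. Then for each ι ∈ Aut(T) fixing every element of H, the map ι̃ : S → S given by s ↦ s for s ∈ S \ T and t ↦ t^ι for t ∈ T preserves all intersection numbers, i.e., ι̃ ∈ Aut(S). -/

import Mathlib

open scoped Classical

/-- The diagonal relation `1_X`. -/
def diagRel (X : Type*) : Set (X × X) := {p | p.1 = p.2}

/-- The converse relation `s*`. -/
def conv {X : Type*} (s : Set (X × X)) : Set (X × X) := {p | (p.2, p.1) ∈ s}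

/-- The intersection number `c_{st}^u`, well-defined for association schemes. -/
noncomputable def inum {X : Type*} (s t u : Set (X × X)) : ℕ :=
  sSup {n | ∃ p ∈ u, n = Nat.card {z : X | (p.1, z) ∈ s ∧ (z, p.2) ∈ t}}

/-- `(X, S)` is an association scheme. -/
def IsScheme {X : Type*} (S : Set (Set (X × X))) : Prop :=
  (∀ x y : X, ∃! s, s ∈ S ∧ (x, y) ∈ s) ∧
  (∀ s ∈ S, s.Nonempty) ∧
  diagRel X ∈ S ∧
  (∀ s ∈ S, conv s ∈ S) ∧
  (∀ s ∈ S, ∀ t ∈ S, ∀ u ∈ S, ∀ p ∈ u, ∀ q ∈ u,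
    Nat.card {z : X | (p.1, z) ∈ s ∧ (z, p.2) ∈ t} =
      Nat.card {z : X | (q.1, z) ∈ s ∧ (z, q.2) ∈ t})

/-- The complex product `PQ` of subsets of `S`. -/
noncomputable def cprod {X : Type*} (S P Q : Set (Set (X × X))) : Set (Set (X × X)) :=
  {u ∈ S | ∃ p ∈ P, ∃ q ∈ Q, inum p q u ≠ 0}

/-- The valency `n_s`. -/
noncomputable def nval {X : Type*} (s : Set (X × X)) : ℕ :=
  sSup {n | ∃ x : X, n = Nat.card {y : X | (x, y) ∈ s}}

/-- `T` is a closed subset of `S`. -/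
def IsClosedSub {X : Type*} (S T : Set (Set (X × X))) : Prop :=
  T.Nonempty ∧ T ⊆ S ∧ cprod S T T ⊆ T

/-- `T` is strongly normal in `S`. -/
def IsStronglyNormal {X : Type*} (S T : Set (Set (X × X))) : Prop :=
  IsClosedSub S T ∧ ∀ s ∈ S, cprod S (cprod S {conv s} T) {s} ⊆ T

/-- The thin radical `O_θ(S)`. -/
noncomputable def thinRadical {X : Type*} (S : Set (Set (X × X))) : Set (Set (X × X)) :=
  {s ∈ S | nval s = 1}

/-- The thin residue `O^θ(S)`. -/
noncomputable def thinResidue {X : Type*} (S : Set (Set (X × X))) : Set (Set (X × X)) :=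
  ⋂₀ {T | IsStronglyNormal S T}

/-- `T` is thin: all valencies `1`. -/
def IsThin {X : Type*} (T : Set (Set (X × X))) : Prop := ∀ t ∈ T, nval t = 1

/-- The left stabilizer `L(s) = {t ∈ T | ts = {s}}`. -/
noncomputable def lstab {X : Type*} (S T : Set (Set (X × X))) (s : Set (X × X)) :
    Set (Set (X × X)) := {t ∈ T | cprod S {t} {s} = {s}}

/-- `e` is an isomorphism from `C_p × C_p` onto the thin closed subset `T`
(with the relational product as group operation). -/
def IsoElemAb {X : Type*} (S T : Set (Set (X × X))) (p : ℕ)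
    (e : ZMod p × ZMod p → Set (X × X)) : Prop :=
  (∀ a, e a ∈ T) ∧ Function.Injective e ∧ (∀ t ∈ T, ∃ a, e a = t) ∧
  e 0 = diagRel X ∧ ∀ a b, cprod S {e a} {e b} = {e (a + b)}

/-- The coset `xT`. -/
def coset {X : Type*} (T : Set (Set (X × X))) (x : X) : Set X := {y | ∃ t ∈ T, (x, y) ∈ t}

/-- The point set `X/T`. -/
def pts {X : Type*} (T : Set (Set (X × X))) : Set (Set X) := {C | ∃ x, C = coset T x}

/-- `L_{ij}` for the cosets of `x` and `y`: the left stabilizer of any relation containing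
`(x, y)`. -/
noncomputable def pairStab {X : Type*} (S T : Set (Set (X × X))) (x y : X) :
    Set (Set (X × X)) :=
  {t ∈ T | ∀ s ∈ S, (x, y) ∈ s → cprod S {t} {s} = {s}}

/-- The line `L_i(M)` through the coset of `x` determined by the subgroup `M < T`. -/
noncomputable def lineOf {X : Type*} (S T : Set (Set (X × X))) (x : X)
    (M : Set (Set (X × X))) : Set (Set X) :=
  insert (coset T x) {C | ∃ y, C = coset T y ∧ coset T y ≠ coset T x ∧ pairStab S T x y = M}

/-- The set of lines of the incidence structure on `X/T`. -/
noncomputable def linesOf {X : Type*} (S T : Set (Set (X × X))) : Set (Set (Set X)) :=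
  {ℓ | ∃ x M, IsClosedSub S M ∧ M ⊆ T ∧ M ≠ {diagRel X} ∧ M ≠ T ∧
    ℓ = lineOf S T x M ∧ 2 ≤ Nat.card ℓ}

/-- The extension of a permutation `ι` of `T` to `S`, fixing `S \\ T` pointwise. -/
noncomputable def extOf {X : Type*} (T : Set (Set (X × X)))
    (ι : Set (X × X) → Set (X × X)) (s : Set (X × X)) : Set (X × X) :=
  if s ∈ T then ι s else s

section As14Infra

set_option linter.unusedSectionVars false

variable {X : Type*} [Fintype X] {S : Set (Set (X × X))}

/-- Union of a collection of relations. -/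
def as14RU (P : Set (Set (X × X))) : Set (X × X) := {p | ∃ r ∈ P, p ∈ r}

lemma as14_conv_conv (s : Set (X × X)) : conv (conv s) = s := by
  ext ⟨x, y⟩; rfl

lemma as14_mem_conv {s : Set (X × X)} {x y : X} : (x, y) ∈ conv s ↔ (y, x) ∈ s := Iff.rfl

lemma as14_ncard_filter (p : X → Prop) :
    Nat.card {z | p z} = (Finset.univ.filter p).card := by
  rw [Nat.card_eq_fintype_card, Fintype.card_subtype]
  congr 1

lemma as14_uniq (hS : IsScheme S) {s u : Set (X × X)} {p : X × X}
    (hs : s ∈ S) (hu : u ∈ S) (hps : p ∈ s) (hpu : p ∈ u) : s = u := by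
  obtain ⟨r, _, hr⟩ := hS.1 p.1 p.2
  rw [hr s ⟨hs, hps⟩, hr u ⟨hu, hpu⟩]

lemma as14_rel_exists (hS : IsScheme S) (x y : X) : ∃ s ∈ S, (x, y) ∈ s := by
  obtain ⟨r, ⟨hr1, hr2⟩, -⟩ := hS.1 x y
  exact ⟨r, hr1, hr2⟩

lemma as14_inum_eq (hS : IsScheme S) {s t u : Set (X × X)} (hs : s ∈ S) (ht : t ∈ S)
    (hu : u ∈ S) {p : X × X} (hp : p ∈ u) :
    inum s t u = Nat.card {z : X | (p.1, z) ∈ s ∧ (z, p.2) ∈ t} := by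
  have hset : {n | ∃ q ∈ u, n = Nat.card {z : X | (q.1, z) ∈ s ∧ (z, q.2) ∈ t}}
      = {Nat.card {z : X | (p.1, z) ∈ s ∧ (z, p.2) ∈ t}} := by
    ext n
    constructor
    · rintro ⟨q, hq, rfl⟩
      exact hS.2.2.2.2 s hs t ht u hu q hq p hp
    · rintro rfl
      exact ⟨p, hp, rfl⟩
  rw [inum, hset, csSup_singleton]

lemma as14_inum_ne (hS : IsScheme S) {s t u : Set (X × X)} (hs : s ∈ S) (ht : t ∈ S)
    (hu : u ∈ S) :
    inum s t u ≠ 0 ↔ ∃ x y z : X, (x, y) ∈ u ∧ (x, z) ∈ s ∧ (z, y) ∈ t := by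
  obtain ⟨⟨a, b⟩, hab⟩ := hS.2.1 u hu
  rw [as14_inum_eq hS hs ht hu hab]
  constructor
  · intro hne
    have : ({z : X | (a, z) ∈ s ∧ (z, b) ∈ t}).Nonempty := by
      by_contra hemp
      rw [Set.not_nonempty_iff_eq_empty] at hemp
      rw [hemp] at hne
      simp at hne
    obtain ⟨z, hz⟩ := this
    exact ⟨a, b, z, hab, hz.1, hz.2⟩
  · rintro ⟨x, y, z, hxy, hxz, hzy⟩
    rw [hS.2.2.2.2 s hs t ht u hu (a, b) hab (x, y) hxy]
    have : ({z : X | (x, z) ∈ s ∧ (z, y) ∈ t}).Nonempty := ⟨z, hxz, hzy⟩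
    exact Nat.card_ne_zero.mpr ⟨this.to_subtype, (Set.toFinite _).to_subtype⟩

lemma as14_succ (hS : IsScheme S) {s : Set (X × X)} (hs : s ∈ S) (x : X) :
    ∃ z, (x, z) ∈ s := by
  obtain ⟨⟨a, b⟩, hab⟩ := hS.2.1 s hs
  have hkey := hS.2.2.2.2 s hs (conv s) (hS.2.2.2.1 s hs) (diagRel X) hS.2.2.1
    (a, a) rfl (x, x) rfl
  have hA : {z : X | (a, z) ∈ s ∧ (z, a) ∈ conv s} = {z : X | (a, z) ∈ s} := by
    ext z; simp [as14_mem_conv]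
  have hB : {z : X | (x, z) ∈ s ∧ (z, x) ∈ conv s} = {z : X | (x, z) ∈ s} := by
    ext z; simp [as14_mem_conv]
  rw [hA, hB] at hkey
  have hne : Nat.card {z : X | (a, z) ∈ s} ≠ 0 :=
    Nat.card_ne_zero.mpr ⟨⟨⟨b, hab⟩⟩, (Set.toFinite _).to_subtype⟩
  rw [hkey] at hne
  have := Nat.card_ne_zero.mp hne
  obtain ⟨⟨z, hz⟩⟩ := this.1
  exact ⟨z, hz⟩

lemma as14_nval_eq (hS : IsScheme S) {s : Set (X × X)} (hs : s ∈ S) (x : X) :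
    nval s = Nat.card {z : X | (x, z) ∈ s} := by
  have hconst : ∀ y : X, Nat.card {z : X | (y, z) ∈ s} = Nat.card {z : X | (x, z) ∈ s} := by
    intro y
    have hkey := hS.2.2.2.2 s hs (conv s) (hS.2.2.2.1 s hs) (diagRel X) hS.2.2.1
      (y, y) rfl (x, x) rfl
    have hA : {z : X | (y, z) ∈ s ∧ (z, y) ∈ conv s} = {z : X | (y, z) ∈ s} := by
      ext z; simp [as14_mem_conv]
    have hB : {z : X | (x, z) ∈ s ∧ (z, x) ∈ conv s} = {z : X | (x, z) ∈ s} := by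
      ext z; simp [as14_mem_conv]
    rw [hA, hB] at hkey
    exact hkey
  have hset : {n | ∃ y : X, n = Nat.card {z : X | (y, z) ∈ s}}
      = {Nat.card {z : X | (x, z) ∈ s}} := by
    ext n
    constructor
    · rintro ⟨y, rfl⟩; exact hconst y
    · rintro rfl; exact ⟨x, rfl⟩
  rw [nval, hset, csSup_singleton]

lemma as14_nval_ne (hS : IsScheme S) {s : Set (X × X)} (hs : s ∈ S) (x : X) :
    nval s ≠ 0 := by
  rw [as14_nval_eq hS hs x]
  obtain ⟨z, hz⟩ := as14_succ hS hs x
  exact Nat.card_ne_zero.mpr ⟨⟨⟨z, hz⟩⟩, (Set.toFinite _).to_subtype⟩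

lemma as14_mem_cprod (hS : IsScheme S) {P Q : Set (Set (X × X))} (hPS : P ⊆ S) (hQS : Q ⊆ S)
    {u a b : Set (X × X)} (hu : u ∈ S) {x y z : X} (hxy : (x, y) ∈ u)
    (ha : a ∈ P) (hb : b ∈ Q) (haz : (x, z) ∈ a) (hzy : (z, y) ∈ b) :
    u ∈ cprod S P Q := by
  refine ⟨hu, a, ha, b, hb, ?_⟩
  rw [as14_inum_ne hS (hPS ha) (hQS hb) hu]
  exact ⟨x, y, z, hxy, haz, hzy⟩

lemma as14_cprod_elim (hS : IsScheme S) {P Q : Set (Set (X × X))} (hPS : P ⊆ S) (hQS : Q ⊆ S)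
    {u : Set (X × X)} (hu : u ∈ cprod S P Q) :
    ∃ a ∈ P, ∃ b ∈ Q, ∃ x y z : X, (x, y) ∈ u ∧ (x, z) ∈ a ∧ (z, y) ∈ b := by
  obtain ⟨huS, a, ha, b, hb, hne⟩ := hu
  rw [as14_inum_ne hS (hPS ha) (hQS hb) huS] at hne
  exact ⟨a, ha, b, hb, hne⟩

end As14Infra
section As14Closed

set_option linter.unusedSectionVars false

variable {X : Type*} [Fintype X] {S C : Set (Set (X × X))}

lemma as14_closed_trans (hS : IsScheme S) (hC : IsClosedSub S C)
    {a b u : Set (X × X)} {x y z : X} (ha : a ∈ C) (hb : b ∈ C) (hu : u ∈ S)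
    (hxy : (x, y) ∈ u) (hxz : (x, z) ∈ a) (hzy : (z, y) ∈ b) : u ∈ C :=
  hC.2.2 (as14_mem_cprod hS hC.2.1 hC.2.1 hu hxy ha hb hxz hzy)

/-- Chain composition: from a `t`-chain, all long-range relations lie in `C`. -/
lemma as14_chain (hS : IsScheme S) (hC : IsClosedSub S C) {t : Set (X × X)} (ht : t ∈ C)
    (g : ℕ → X) (hg : ∀ n, (g n, g (n + 1)) ∈ t) :
    ∀ i j, i < j → ∃ c ∈ C, (g i, g j) ∈ c := by
  intro i j hij
  induction j with
  | zero => omega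
  | succ j ih =>
    rcases Nat.lt_or_ge i j with h | h
    · obtain ⟨c, hc, hgc⟩ := ih h
      obtain ⟨u, huS, hu⟩ := as14_rel_exists hS (g i) (g (j + 1))
      exact ⟨u, as14_closed_trans hS hC hc ht huS hu hgc (hg j), hu⟩
    · have : i = j := by omega
      subst this
      exact ⟨t, ht, hg i⟩

lemma as14_diag_conv_mem (hS : IsScheme S) (hC : IsClosedSub S C) :
    diagRel X ∈ C ∧ ∀ t ∈ C, conv t ∈ C := by
  have key : ∀ t ∈ C, (∃ c ∈ C, c = diagRel X) ∧ conv t ∈ C := by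
    intro t ht
    obtain ⟨⟨x0, x1⟩, hx⟩ := hS.2.1 t (hC.2.1 ht)
    -- build a chain
    have hstep : ∀ z : X, ∃ z', (z, z') ∈ t := fun z => as14_succ hS (hC.2.1 ht) z
    choose f hf using hstep
    set g : ℕ → X := fun n => f^[n] x0 with hgdef
    have hg : ∀ n, (g n, g (n + 1)) ∈ t := by
      intro n
      have : g (n + 1) = f (g n) := Function.iterate_succ_apply' f n x0
      rw [this]
      exact hf (g n)
    obtain ⟨i, j, hne, heq⟩ := Finite.exists_ne_map_eq_of_infinite g
    wlog hij : i < j generalizing i j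
    · exact this j i hne.symm heq.symm (by omega)
    obtain ⟨c, hc, hgc⟩ := as14_chain hS hC ht g hg i j hij
    have hdiagC : diagRel X ∈ C := by
      have h1 : (g i, g i) ∈ c := by rw [heq] at hgc ⊢; exact hgc
      have h2 : (g i, g i) ∈ diagRel X := rfl
      have := as14_uniq hS (hC.2.1 hc) hS.2.2.1 h1 h2
      rwa [← this]
    refine ⟨⟨diagRel X, hdiagC, rfl⟩, ?_⟩
    -- conv t ∈ C
    have hconvmem : (g (i + 1), g i) ∈ conv t := hg i
    have : ∃ c' ∈ C, (g (i + 1), g i) ∈ c' := by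
      rcases Nat.lt_or_ge (i + 1) j with h | h
      · obtain ⟨c', hc', hgc'⟩ := as14_chain hS hC ht g hg (i + 1) j h
        rw [← heq] at hgc'
        exact ⟨c', hc', hgc'⟩
      · have hij1 : i + 1 = j := by omega
        have : g (i + 1) = g i := by rw [hij1, ← heq]
        refine ⟨diagRel X, hdiagC, ?_⟩
        rw [this]; rfl
    obtain ⟨c', hc', hgc'⟩ := this
    have := as14_uniq hS (hS.2.2.2.1 t (hC.2.1 ht)) (hC.2.1 hc') hconvmem hgc'
    rwa [this]
  obtain ⟨t, ht⟩ := hC.1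
  obtain ⟨⟨d, hd, hdiag⟩, -⟩ := key t ht
  exact ⟨hdiag ▸ hd, fun t' ht' => (key t' ht').2⟩

lemma as14_diag_mem (hS : IsScheme S) (hC : IsClosedSub S C) : diagRel X ∈ C :=
  (as14_diag_conv_mem hS hC).1

lemma as14_conv_mem (hS : IsScheme S) (hC : IsClosedSub S C) {t : Set (X × X)} (ht : t ∈ C) :
    conv t ∈ C := (as14_diag_conv_mem hS hC).2 t ht

lemma as14_RU_refl (hS : IsScheme S) (hC : IsClosedSub S C) (x : X) :
    (x, x) ∈ as14RU C := ⟨diagRel X, as14_diag_mem hS hC, rfl⟩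

lemma as14_RU_symm (hS : IsScheme S) (hC : IsClosedSub S C) {x y : X}
    (h : (x, y) ∈ as14RU C) : (y, x) ∈ as14RU C := by
  obtain ⟨c, hc, hxy⟩ := h
  exact ⟨conv c, as14_conv_mem hS hC hc, hxy⟩

lemma as14_RU_trans (hS : IsScheme S) (hC : IsClosedSub S C) {x y z : X}
    (h1 : (x, y) ∈ as14RU C) (h2 : (y, z) ∈ as14RU C) : (x, z) ∈ as14RU C := by
  obtain ⟨a, ha, hxy⟩ := h1
  obtain ⟨b, hb, hyz⟩ := h2
  obtain ⟨u, huS, hu⟩ := as14_rel_exists hS x z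
  exact ⟨u, as14_closed_trans hS hC ha hb huS hu hxy hyz, hu⟩

lemma as14_mem_RU {P : Set (Set (X × X))} {p : X × X} {r : Set (X × X)}
    (hr : r ∈ P) (hp : p ∈ r) : p ∈ as14RU P := ⟨r, hr, hp⟩

end As14Closed
section As14Count

set_option linter.unusedSectionVars false

variable {X : Type*} [Fintype X] {S H T : Set (Set (X × X))}

/-- Decomposition of a count over the union of disjoint relations. -/
lemma as14_card_split (hS : IsScheme S) {P : Set (Set (X × X))} (hP : P ⊆ S)
    (A : X → Prop) (q : X) :
    Nat.card {z | A z ∧ (q, z) ∈ as14RU P}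
      = ∑ h ∈ (Set.toFinite P).toFinset, Nat.card {z | A z ∧ (q, z) ∈ h} := by
  simp only [as14_ncard_filter]
  rw [← Finset.card_biUnion]
  · congr 1
    ext z
    simp only [Finset.mem_filter, Finset.mem_univ, true_and, Finset.mem_biUnion,
      Set.Finite.mem_toFinset]
    constructor
    · rintro ⟨hA, r, hr, hqz⟩
      exact ⟨r, hr, hA, hqz⟩
    · rintro ⟨r, hr, hA, hqz⟩
      exact ⟨hA, r, hr, hqz⟩
  · intro h1 hh1 h2 hh2 hne
    rw [Finset.mem_coe, Set.Finite.mem_toFinset] at hh1 hh2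
    rw [Function.onFun, Finset.disjoint_left]
    intro z hz1 hz2
    simp only [Finset.mem_filter] at hz1 hz2
    exact hne (as14_uniq hS (hP hh1) (hP hh2) hz1.2.2 hz2.2.2)

/-- The cardinality of an `H`-coset is independent of the base point. -/
lemma as14_coset_card (hS : IsScheme S) (hH : IsClosedSub S H) (a b : X) :
    Nat.card {z | (a, z) ∈ as14RU H} = Nat.card {z | (b, z) ∈ as14RU H} := by
  have key : ∀ c : X, Nat.card {z | (c, z) ∈ as14RU H}
      = ∑ h ∈ (Set.toFinite H).toFinset, nval h := by
    intro c
    have h0 : {z | (c, z) ∈ as14RU H} = {z | True ∧ (c, z) ∈ as14RU H} := by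
      ext z; simp
    rw [h0, as14_card_split hS hH.2.1 (fun _ => True) c]
    apply Finset.sum_congr rfl
    intro h hh
    rw [Set.Finite.mem_toFinset] at hh
    have h1 : {z | True ∧ (c, z) ∈ h} = {z | (c, z) ∈ h} := by ext z; simp
    rw [h1, as14_nval_eq hS (hH.2.1 hh) c]
  rw [key a, key b]

/-- Configuration constancy: the size of the intersection of `u(x)` with the `H`-coset of a
point of `u(x)` does not depend on the configuration. -/
lemma as14_count_const (hS : IsScheme S) (hH : IsClosedSub S H) {u : Set (X × X)}
    (hu : u ∈ S) {x z0 x' z0' : X} (h1 : (x, z0) ∈ u) (h2 : (x', z0') ∈ u) :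
    Nat.card {z | (x, z) ∈ u ∧ (z, z0) ∈ as14RU H}
      = Nat.card {z | (x', z) ∈ u ∧ (z, z0') ∈ as14RU H} := by
  have key : ∀ (c d : X), (c, d) ∈ u →
      Nat.card {z | (c, z) ∈ u ∧ (z, d) ∈ as14RU H}
        = ∑ h ∈ (Set.toFinite H).toFinset, inum u (conv h) u := by
    intro c d hcd
    have hswap : {z | (c, z) ∈ u ∧ (z, d) ∈ as14RU H}
        = {z | (c, z) ∈ u ∧ (d, z) ∈ as14RU H} := by
      ext z
      exact and_congr_right fun _ => ⟨as14_RU_symm hS hH, as14_RU_symm hS hH⟩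
    rw [hswap, as14_card_split hS hH.2.1 (fun z => (c, z) ∈ u) d]
    apply Finset.sum_congr rfl
    intro h hh
    rw [Set.Finite.mem_toFinset] at hh
    rw [as14_inum_eq hS hu (hS.2.2.2.1 h (hH.2.1 hh)) hu hcd]
    congr 1
  rw [key x z0 h1, key x' z0' h2]

/-- Double counting. -/
lemma as14_doublecount (A B : Finset X) (R : X → X → Prop) :
    ∑ b ∈ B, (A.filter (fun a => R a b)).card
      = ∑ a ∈ A, (B.filter (fun b => R a b)).card := by
  simp only [Finset.card_filter]
  exact Finset.sum_comm

end As14Count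
section As14Sat

set_option linter.unusedSectionVars false

variable {X : Type*} [Fintype X] {S H T : Set (Set (X × X))}

/-- Right saturation from condition (ii): the fibers of `t ∈ T \ H` are unions of
`H`-cosets. -/
lemma as14_satR (hS : IsScheme S) (hH : IsClosedSub S H)
    (h2 : ∀ t ∈ T \ H, cprod S {t} H = {t})
    {t : Set (X × X)} (htS : t ∈ S) (htTH : t ∈ T \ H) {x z z' : X}
    (hxz : (x, z) ∈ t) (hzz' : (z, z') ∈ as14RU H) : (x, z') ∈ t := by
  obtain ⟨h, hh, hzz'⟩ := hzz'
  obtain ⟨u, huS, hu⟩ := as14_rel_exists hS x z'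
  have hmem : u ∈ cprod S {t} H := by
    refine as14_mem_cprod hS ?_ hH.2.1 huS hu rfl hh hxz hzz'
    simpa using htS
  rw [h2 t htTH] at hmem
  rwa [← hmem]

/-- Left saturation, for `t ∈ T \ H` with `T, H` closed. -/
lemma as14_satL (hS : IsScheme S) (hH : IsClosedSub S H) (hT : IsClosedSub S T)
    (h2 : ∀ t ∈ T \ H, cprod S {t} H = {t})
    {t : Set (X × X)} (htTH : t ∈ T \ H) {z y z' : X}
    (hzy : (z, y) ∈ t) (hz'z : (z', z) ∈ as14RU H) : (z', y) ∈ t := by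
  have hct : conv t ∈ T \ H := by
    refine ⟨as14_conv_mem hS hT htTH.1, fun hc => htTH.2 ?_⟩
    have := as14_conv_mem hS hH hc
    rwa [as14_conv_conv] at this
  have h1 : (y, z) ∈ conv t := hzy
  have h2' : (z, z') ∈ as14RU H := as14_RU_symm hS hH hz'z
  exact as14_satR hS hH h2 (hS.2.2.2.1 t (hT.2.1 htTH.1)) hct h1 h2'

/-- Condition (i): if `u(x)` meets a `T`-class, it meets each `H`-class inside it. -/
lemma as14_meet (hS : IsScheme S) (hH : IsClosedSub S H) (hT : IsClosedSub S T)
    (h1 : ∀ s ∈ S \ T, cprod S {s} H = cprod S {s} T)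
    {u : Set (X × X)} (huS : u ∈ S) (huT : u ∉ T) {x z z1 : X}
    (hxz : (x, z) ∈ u) (hzz1 : (z, z1) ∈ as14RU T) :
    ∃ z'', (x, z'') ∈ u ∧ (z'', z1) ∈ as14RU H := by
  obtain ⟨t0, ht0, hzt⟩ := hzz1
  obtain ⟨w, hwS, hw⟩ := as14_rel_exists hS x z1
  have hw1 : w ∈ cprod S {u} T := by
    refine as14_mem_cprod hS ?_ hT.2.1 hwS hw rfl ht0 hxz hzt
    simpa using huS
  have hw2 : w ∈ cprod S {u} H := by
    rw [h1 u ⟨huS, huT⟩]; exact hw1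
  obtain ⟨a, ha, b, hb, x', y', z', hxy', hxz', hzy'⟩ :=
    as14_cprod_elim hS (by simpa using huS) hH.2.1 hw2
  rw [Set.mem_singleton_iff] at ha
  rw [ha] at hxz'
  -- transfer the configuration to the point (x, z1) of w
  have hne : inum u b w ≠ 0 := by
    rw [as14_inum_ne hS huS (hH.2.1 hb) hwS]
    exact ⟨x', y', z', hxy', hxz', hzy'⟩
  rw [as14_inum_eq hS huS (hH.2.1 hb) hwS hw] at hne
  obtain ⟨⟨z'', hz''⟩⟩ := (Nat.card_ne_zero.mp hne).1
  exact ⟨z'', hz''.1, ⟨b, hb, hz''.2⟩⟩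

end As14Sat
section As14Main

set_option linter.unusedSectionVars false

variable {X : Type*} [Fintype X] {S H T : Set (Set (X × X))}

lemma as14_card_filter_filter (p q : X → Prop) :
    ((Finset.univ.filter p).filter q).card = Nat.card {z | p z ∧ q z} := by
  rw [Finset.filter_filter, as14_ncard_filter]
  congr!

/-- The main counting lemma: for `u ∉ T` and `t, t' ∈ T \ H` of equal (converse) valency,
the counts agree at every pair of points. -/
lemma as14_main (hS : IsScheme S) (hH : IsClosedSub S H) (hT : IsClosedSub S T)
    (h1 : ∀ s ∈ S \ T, cprod S {s} H = cprod S {s} T)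
    (h2 : ∀ t ∈ T \ H, cprod S {t} H = {t})
    {u t t' : Set (X × X)} (huS : u ∈ S) (huT : u ∉ T)
    (ht : t ∈ T \ H) (ht' : t' ∈ T \ H)
    (hn : nval (conv t) = nval (conv t')) (x y : X) :
    Nat.card {z | (x, z) ∈ u ∧ (z, y) ∈ t} = Nat.card {z | (x, z) ∈ u ∧ (z, y) ∈ t'} := by
  by_cases hex : ∃ zs, (x, zs) ∈ u ∧ (zs, y) ∈ as14RU T
  · obtain ⟨zs, hzs, hzsT⟩ := hex
    set nH := Nat.card {z | (x, z) ∈ as14RU H} with hnH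
    set m := Nat.card {z | (x, z) ∈ u ∧ (z, zs) ∈ as14RU H} with hm
    have KI : ∀ s, s ∈ T \ H →
        Nat.card {z | (x, z) ∈ u ∧ (z, y) ∈ s} * nH = nval (conv s) * m := by
      intro s hsTH
      have hsS : s ∈ S := hT.2.1 hsTH.1
      set Af := Finset.univ.filter (fun a : X => (x, a) ∈ u) with hAf
      set Bf := Finset.univ.filter (fun z1 : X => (z1, y) ∈ s) with hBf
      have hdc := as14_doublecount Af Bf (fun a z1 => (a, z1) ∈ as14RU H)
      have hL : ∀ z1 ∈ Bf, (Af.filter (fun a => (a, z1) ∈ as14RU H)).card = m := by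
        intro z1 hz1
        rw [hBf, Finset.mem_filter] at hz1
        have hz1y : (z1, y) ∈ as14RU T := ⟨s, hsTH.1, hz1.2⟩
        have hzsz1 : (zs, z1) ∈ as14RU T :=
          as14_RU_trans hS hT hzsT (as14_RU_symm hS hT hz1y)
        obtain ⟨z'', hz''u, hz''z1⟩ := as14_meet hS hH hT h1 huS huT hzs hzsz1
        rw [hAf, as14_card_filter_filter]
        have hsetq : {z | (x, z) ∈ u ∧ (z, z1) ∈ as14RU H}
            = {z | (x, z) ∈ u ∧ (z, z'') ∈ as14RU H} := by
          ext z
          refine and_congr_right fun _ => ⟨fun h => ?_, fun h => ?_⟩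
          · exact as14_RU_trans hS hH h (as14_RU_symm hS hH hz''z1)
          · exact as14_RU_trans hS hH h hz''z1
        rw [hsetq, hm]
        exact as14_count_const hS hH huS hz''u hzs
      have hR : ∀ a ∈ Af, (Bf.filter (fun z1 => (a, z1) ∈ as14RU H)).card
          = if (a, y) ∈ s then nH else 0 := by
        intro a ha
        rw [hAf, Finset.mem_filter] at ha
        rw [hBf, as14_card_filter_filter]
        by_cases hay : (a, y) ∈ s
        · rw [if_pos hay]
          have hset : {z1 | (z1, y) ∈ s ∧ (a, z1) ∈ as14RU H}
              = {z1 | (a, z1) ∈ as14RU H} := by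
            ext z1
            refine ⟨fun h => h.2, fun h => ⟨?_, h⟩⟩
            exact as14_satL hS hH hT h2 hsTH hay (as14_RU_symm hS hH h)
          rw [hset, hnH]
          exact as14_coset_card hS hH a x
        · rw [if_neg hay]
          have hset : {z1 | (z1, y) ∈ s ∧ (a, z1) ∈ as14RU H} = (∅ : Set X) := by
            ext z1
            simp only [Set.mem_setOf_eq, Set.mem_empty_iff_false, iff_false, not_and]
            intro hz1y haz1
            exact absurd (as14_satL hS hH hT h2 hsTH hz1y haz1) hay
          rw [hset]
          simp
      rw [Finset.sum_congr rfl hL, Finset.sum_congr rfl hR, Finset.sum_const,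
        smul_eq_mul] at hdc
      have hsum : ∑ a ∈ Af, (if (a, y) ∈ s then nH else 0)
          = (Af.filter (fun a => (a, y) ∈ s)).card * nH := by
        rw [← Finset.sum_filter, Finset.sum_const, smul_eq_mul]
      rw [hsum] at hdc
      have hBcard : Bf.card = nval (conv s) := by
        rw [as14_nval_eq hS (hS.2.2.2.1 s hsS) y]
        have : {z : X | (y, z) ∈ conv s} = {z : X | (z, y) ∈ s} := rfl
        rw [this, as14_ncard_filter, hBf]
      have hTcard : (Af.filter (fun a => (a, y) ∈ s)).card
          = Nat.card {z | (x, z) ∈ u ∧ (z, y) ∈ s} := by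
        rw [hAf, as14_card_filter_filter]
      rw [hBcard, hTcard] at hdc
      rw [mul_comm (nval (conv s)) m, ← hdc, mul_comm]
    have hnH0 : 0 < nH := by
      rw [hnH]
      have : x ∈ {z | (x, z) ∈ as14RU H} := as14_RU_refl hS hH x
      exact Nat.card_pos_iff.mpr ⟨⟨x, this⟩, (Set.toFinite _).to_subtype⟩
    have e1 := KI t ht
    have e2 := KI t' ht'
    rw [hn] at e1
    rw [← e2] at e1
    exact Nat.eq_of_mul_eq_mul_right hnH0 e1
  · have e1 : {z | (x, z) ∈ u ∧ (z, y) ∈ t} = (∅ : Set X) := by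
      ext z
      simp only [Set.mem_setOf_eq, Set.mem_empty_iff_false, iff_false, not_and]
      intro hz1 hz2
      exact absurd ⟨z, hz1, ⟨t, ht.1, hz2⟩⟩ hex
    have e2 : {z | (x, z) ∈ u ∧ (z, y) ∈ t'} = (∅ : Set X) := by
      ext z
      simp only [Set.mem_setOf_eq, Set.mem_empty_iff_false, iff_false, not_and]
      intro hz1 hz2
      exact absurd ⟨z, hz1, ⟨t', ht'.1, hz2⟩⟩ hex
    rw [e1, e2]

/-- The main lemma at the level of intersection numbers. -/
lemma as14_mainB (hS : IsScheme S) (hH : IsClosedSub S H) (hT : IsClosedSub S T)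
    (h1 : ∀ s ∈ S \ T, cprod S {s} H = cprod S {s} T)
    (h2 : ∀ t ∈ T \ H, cprod S {t} H = {t})
    {u t t' w : Set (X × X)} (huS : u ∈ S) (huT : u ∉ T)
    (ht : t ∈ T \ H) (ht' : t' ∈ T \ H)
    (hn : nval (conv t) = nval (conv t')) (hw : w ∈ S) :
    inum u t w = inum u t' w := by
  obtain ⟨⟨a, b⟩, hab⟩ := hS.2.1 w hw
  rw [as14_inum_eq hS huS (hT.2.1 ht.1) hw hab,
    as14_inum_eq hS huS (hT.2.1 ht'.1) hw hab]
  exact as14_main hS hH hT h1 h2 huS huT ht ht' hn a b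

end As14Main
section As14Aux

set_option linter.unusedSectionVars false

variable {X : Type*} [Fintype X] {S H T : Set (Set (X × X))}

lemma as14_inum_conv (s t u : Set (X × X)) :
    inum s t u = inum (conv t) (conv s) (conv u) := by
  have hset : ∀ a b : X, {z | (b, z) ∈ conv t ∧ (z, a) ∈ conv s}
      = {z | (a, z) ∈ s ∧ (z, b) ∈ t} := by
    intro a b
    ext z
    exact ⟨fun h => ⟨h.2, h.1⟩, fun h => ⟨h.2, h.1⟩⟩
  unfold inum
  congr 1
  ext n
  constructor
  · rintro ⟨⟨a, b⟩, hp, rfl⟩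
    refine ⟨(b, a), hp, ?_⟩
    show Nat.card {z | (a, z) ∈ s ∧ (z, b) ∈ t}
      = Nat.card {z | (b, z) ∈ conv t ∧ (z, a) ∈ conv s}
    rw [hset a b]
  · rintro ⟨⟨b, a⟩, hp, rfl⟩
    refine ⟨(a, b), (hp : (a, b) ∈ u), ?_⟩
    show Nat.card {z | (b, z) ∈ conv t ∧ (z, a) ∈ conv s}
      = Nat.card {z | (a, z) ∈ s ∧ (z, b) ∈ t}
    rw [hset a b]

lemma as14_triple (hS : IsScheme S) {u v t : Set (X × X)}
    (hu : u ∈ S) (hv : v ∈ S) (ht : t ∈ S) :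
    nval t * inum u v t = nval u * inum v (conv t) (conv u) := by
  obtain ⟨⟨x, x'⟩, -⟩ := hS.2.1 (diagRel X) hS.2.2.1
  have hsum1 : ∀ y : X,
      (∑ z ∈ Finset.univ, if (x, y) ∈ t ∧ (x, z) ∈ u ∧ (z, y) ∈ v then 1 else 0)
        = if (x, y) ∈ t then inum u v t else 0 := by
    intro y
    by_cases hy : (x, y) ∈ t
    · have hin : inum u v t = Nat.card {z : X | (x, z) ∈ u ∧ (z, y) ∈ v} :=
        as14_inum_eq hS hu hv ht hy
      rw [if_pos hy, hin, as14_ncard_filter, Finset.card_filter]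
      apply Finset.sum_congr rfl
      intro z _
      by_cases hzz : (x, z) ∈ u ∧ (z, y) ∈ v
      · rw [if_pos ⟨hy, hzz.1, hzz.2⟩, if_pos hzz]
      · rw [if_neg (fun h => hzz ⟨h.2.1, h.2.2⟩), if_neg hzz]
    · rw [if_neg hy]
      apply Finset.sum_eq_zero
      intro z _
      rw [if_neg (fun h => hy h.1)]
  have hsum2 : ∀ z : X,
      (∑ y ∈ Finset.univ, if (x, y) ∈ t ∧ (x, z) ∈ u ∧ (z, y) ∈ v then 1 else 0)
        = if (x, z) ∈ u then inum v (conv t) (conv u) else 0 := by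
    intro z
    by_cases hz : (x, z) ∈ u
    · rw [if_pos hz]
      have hzx : ((z, x) : X × X) ∈ conv u := hz
      have hin : inum v (conv t) (conv u)
          = Nat.card {y : X | (z, y) ∈ v ∧ (y, x) ∈ conv t} :=
        as14_inum_eq hS hv (hS.2.2.2.1 t ht) (hS.2.2.2.1 u hu) hzx
      rw [hin, as14_ncard_filter, Finset.card_filter]
      apply Finset.sum_congr rfl
      intro y _
      by_cases hyy : (z, y) ∈ v ∧ (y, x) ∈ conv t
      · rw [if_pos ⟨hyy.2, hz, hyy.1⟩, if_pos hyy]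
      · rw [if_neg (fun h => hyy ⟨h.2.2, h.1⟩), if_neg hyy]
    · rw [if_neg hz]
      apply Finset.sum_eq_zero
      intro y _
      rw [if_neg (fun h => hz h.2.1)]
  have count1 : ∑ y ∈ Finset.univ, (if (x, y) ∈ t then inum u v t else 0)
      = nval t * inum u v t := by
    rw [← Finset.sum_filter, Finset.sum_const, smul_eq_mul,
      as14_nval_eq hS ht x, as14_ncard_filter]
  have count2 : ∑ z ∈ Finset.univ, (if (x, z) ∈ u then inum v (conv t) (conv u) else 0)
      = nval u * inum v (conv t) (conv u) := by
    rw [← Finset.sum_filter, Finset.sum_const, smul_eq_mul,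
      as14_nval_eq hS hu x, as14_ncard_filter]
  calc nval t * inum u v t
      = ∑ y ∈ Finset.univ, (if (x, y) ∈ t then inum u v t else 0) := count1.symm
    _ = ∑ y ∈ Finset.univ, ∑ z ∈ Finset.univ,
          (if (x, y) ∈ t ∧ (x, z) ∈ u ∧ (z, y) ∈ v then 1 else 0) :=
        (Finset.sum_congr rfl fun y _ => (hsum1 y)).symm
    _ = ∑ z ∈ Finset.univ, ∑ y ∈ Finset.univ,
          (if (x, y) ∈ t ∧ (x, z) ∈ u ∧ (z, y) ∈ v then 1 else 0) := Finset.sum_comm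
    _ = ∑ z ∈ Finset.univ, (if (x, z) ∈ u then inum v (conv t) (conv u) else 0) :=
        Finset.sum_congr rfl fun z _ => hsum2 z
    _ = nval u * inum v (conv t) (conv u) := count2

lemma as14_inum_diag_right (hS : IsScheme S) {a r : Set (X × X)} (ha : a ∈ S) (hr : r ∈ S)
    (hne : inum a r (diagRel X) ≠ 0) : r = conv a := by
  rw [as14_inum_ne hS ha hr hS.2.2.1] at hne
  obtain ⟨x, y, z, hxy, hxz, hzy⟩ := hne
  have hyx : x = y := hxy
  subst hyx
  exact as14_uniq hS hr (hS.2.2.2.1 a ha) hzy (hxz : ((z, x) : X × X) ∈ conv a)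

lemma as14_inum_diag_conv (hS : IsScheme S) {a : Set (X × X)} (ha : a ∈ S) :
    inum a (conv a) (diagRel X) = nval a := by
  obtain ⟨⟨x, x'⟩, -⟩ := hS.2.1 (diagRel X) hS.2.2.1
  have hx : ((x, x) : X × X) ∈ diagRel X := rfl
  rw [as14_inum_eq hS ha (hS.2.2.2.1 a ha) hS.2.2.1 hx, as14_nval_eq hS ha x]
  have hset : {z : X | (x, z) ∈ a ∧ (z, x) ∈ conv a} = {z : X | (x, z) ∈ a} := by
    ext z; simp [as14_mem_conv]
  rw [hset]

lemma as14_zero1 (hS : IsScheme S) (hT : IsClosedSub S T) {a b c : Set (X × X)}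
    (ha : a ∈ T) (hb : b ∈ T) (hc : c ∈ S) (hcT : c ∉ T) : inum a b c = 0 := by
  by_contra hne
  replace hne := (as14_inum_ne hS (hT.2.1 ha) (hT.2.1 hb) hc).mp hne
  obtain ⟨x, y, z, h1, h2, h3⟩ := hne
  exact hcT (as14_closed_trans hS hT ha hb hc h1 h2 h3)

lemma as14_zero2 (hS : IsScheme S) (hT : IsClosedSub S T) {a b c : Set (X × X)}
    (ha : a ∈ T) (hb : b ∈ S) (hbT : b ∉ T) (hc : c ∈ T) : inum a b c = 0 := by
  by_contra hne
  replace hne := (as14_inum_ne hS (hT.2.1 ha) hb (hT.2.1 hc)).mp hne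
  obtain ⟨x, y, z, h1, h2, h3⟩ := hne
  have hza : ((z, x) : X × X) ∈ conv a := h2
  exact hbT (as14_closed_trans hS hT (as14_conv_mem hS hT ha) hc hb h3 hza h1)

lemma as14_zero3 (hS : IsScheme S) (hT : IsClosedSub S T) {a b c : Set (X × X)}
    (ha : a ∈ S) (haT : a ∉ T) (hb : b ∈ T) (hc : c ∈ T) : inum a b c = 0 := by
  by_contra hne
  replace hne := (as14_inum_ne hS ha (hT.2.1 hb) (hT.2.1 hc)).mp hne
  obtain ⟨x, y, z, h1, h2, h3⟩ := hne
  have hyz : ((y, z) : X × X) ∈ conv b := h3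
  exact haT (as14_closed_trans hS hT hc (as14_conv_mem hS hT hb) ha h2 h1 hyz)

end As14Aux
/-- Theorem 2: under conditions (i) and (ii), every `ι ∈ Aut(T)` fixing `H`
pointwise extends to an algebraic automorphism of `S`. -/
theorem stmt14 {X : Type*} [Fintype X] (S H T : Set (Set (X × X)))
    (hS : IsScheme S) (hH : IsClosedSub S H) (hTcl : IsClosedSub S T) (hHT : H ⊆ T)
    (hsn : IsStronglyNormal S T)
    (h1 : ∀ s ∈ S \ T, cprod S {s} H = cprod S {s} T)
    (h2 : ∀ t ∈ T \ H, cprod S {t} H = {t})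
    (ι : Set (X × X) → Set (X × X)) (hbij : Set.BijOn ι T T)
    (hautT : ∀ u ∈ T, ∀ v ∈ T, ∀ w ∈ T, inum u v w = inum (ι u) (ι v) (ι w))
    (hfix : ∀ h ∈ H, ι h = h) :
    ∀ u ∈ S, ∀ v ∈ S, ∀ w ∈ S,
      inum u v w = inum (extOf T ι u) (extOf T ι v) (extOf T ι w) := by
  have hmap : ∀ s ∈ T, ι s ∈ T := fun s hs => hbij.mapsTo hs
  have hTS : T ⊆ S := hTcl.2.1
  have hdiagT : diagRel X ∈ T := as14_diag_mem hS hTcl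
  have hiota1 : ι (diagRel X) = diagRel X := by
    obtain ⟨b, hbT, hb1⟩ := hbij.surjOn hdiagT
    have hb0 : inum (diagRel X) b b ≠ 0 := by
      obtain ⟨⟨c, d⟩, hcd⟩ := hS.2.1 b (hTS hbT)
      rw [as14_inum_ne hS hS.2.2.1 (hTS hbT) (hTS hbT)]
      exact ⟨c, d, c, hcd, rfl, hcd⟩
    have heq := hautT (diagRel X) hdiagT b hbT b hbT
    rw [hb1] at heq
    rw [heq] at hb0
    replace hb0 := (as14_inum_ne hS (hTS (hmap _ hdiagT)) (hTS hdiagT) (hTS hdiagT)).mp hb0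
    obtain ⟨x, y, z, hxy, hxz, hzy⟩ := hb0
    have e1 : x = y := hxy
    have e2 : z = y := hzy
    subst e1
    subst e2
    exact as14_uniq hS (hTS (hmap _ hdiagT)) hS.2.2.1 hxz rfl
  have hiotaC : ∀ s ∈ T, ι (conv s) = conv (ι s) := by
    intro s hsT
    have hne : inum s (conv s) (diagRel X) ≠ 0 := by
      rw [as14_inum_diag_conv hS (hTS hsT)]
      obtain ⟨⟨x, x'⟩, -⟩ := hS.2.1 (diagRel X) hS.2.2.1
      exact as14_nval_ne hS (hTS hsT) x
    have heq := hautT s hsT (conv s) (as14_conv_mem hS hTcl hsT) (diagRel X) hdiagT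
    rw [hiota1] at heq
    rw [heq] at hne
    exact as14_inum_diag_right hS (hTS (hmap s hsT))
      (hTS (hmap _ (as14_conv_mem hS hTcl hsT))) hne
  have hiotaN : ∀ s ∈ T, nval (ι s) = nval s := by
    intro s hsT
    have e1 : inum (ι s) (conv (ι s)) (diagRel X) = nval (ι s) :=
      as14_inum_diag_conv hS (hTS (hmap s hsT))
    have heq := hautT s hsT (conv s) (as14_conv_mem hS hTcl hsT) (diagRel X) hdiagT
    rw [hiota1, hiotaC s hsT] at heq
    rw [← e1, ← heq, as14_inum_diag_conv hS (hTS hsT)]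
  have hiotaTH : ∀ s, s ∈ T → s ∉ H → ι s ∈ T ∧ ι s ∉ H := by
    intro s hsT hsH
    refine ⟨hmap s hsT, fun hc => hsH ?_⟩
    have e1 : ι (ι s) = ι s := hfix (ι s) hc
    have e2 : ι s = s := hbij.injOn (hHT hc) hsT e1
    rw [← e2]
    exact hc
  have hconvNotT : ∀ s, s ∈ S → s ∉ T → conv s ∉ T := by
    intro s _ hsT hc
    exact hsT (by rw [← as14_conv_conv s]; exact as14_conv_mem hS hTcl hc)
  have hconvTH : ∀ s, s ∈ T → s ∉ H → conv s ∈ T ∧ conv s ∉ H := by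
    intro s hs1 hs2
    exact ⟨as14_conv_mem hS hTcl hs1, fun hc =>
      hs2 (by rw [← as14_conv_conv s]; exact as14_conv_mem hS hH hc)⟩
  have caseB : ∀ u ∈ S, u ∉ T → ∀ t, t ∈ T → t ∉ H → ∀ w ∈ S,
      inum u t w = inum u (ι t) w := by
    intro u huS huT t htT htH w hwS
    have h' := hiotaTH t htT htH
    refine as14_mainB hS hH hTcl h1 h2 huS huT ⟨htT, htH⟩ ⟨h'.1, h'.2⟩ ?_ hwS
    rw [← hiotaC t htT, hiotaN (conv t) (as14_conv_mem hS hTcl htT)]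
  have caseA : ∀ t, t ∈ T → t ∉ H → ∀ v ∈ S, v ∉ T → ∀ w ∈ S,
      inum t v w = inum (ι t) v w := by
    intro t htT htH v hvS hvT w hwS
    rw [as14_inum_conv t v w, as14_inum_conv (ι t) v w, ← hiotaC t htT]
    have hct := hconvTH t htT htH
    have hct' := hiotaTH (conv t) hct.1 hct.2
    refine as14_mainB hS hH hTcl h1 h2 (hS.2.2.2.1 v hvS) (hconvNotT v hvS hvT)
      ⟨hct.1, hct.2⟩ ⟨hct'.1, hct'.2⟩ ?_ (hS.2.2.2.1 w hwS)
    rw [as14_conv_conv]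
    have e3 : conv (ι (conv t)) = ι t := by
      rw [← hiotaC (conv t) hct.1, as14_conv_conv]
    rw [e3, hiotaN t htT]
  have caseC : ∀ u ∈ S, u ∉ T → ∀ v ∈ S, v ∉ T → ∀ t, t ∈ T → t ∉ H →
      inum u v t = inum u v (ι t) := by
    intro u huS huT v hvS hvT t htT htH
    have k1 := as14_triple hS huS hvS (hTS htT)
    have k2 := as14_triple hS huS hvS (hTS (hmap t htT))
    have hmb : inum v (conv t) (conv u) = inum v (conv (ι t)) (conv u) := by
      rw [← hiotaC t htT]
      have hct := hconvTH t htT htH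
      have hct' := hiotaTH (conv t) hct.1 hct.2
      refine as14_mainB hS hH hTcl h1 h2 hvS hvT ⟨hct.1, hct.2⟩ ⟨hct'.1, hct'.2⟩ ?_
        (hS.2.2.2.1 u huS)
      rw [as14_conv_conv]
      have e3 : conv (ι (conv t)) = ι t := by
        rw [← hiotaC (conv t) hct.1, as14_conv_conv]
      rw [e3, hiotaN t htT]
    rw [hiotaN t htT, ← hmb] at k2
    have hk := k1.trans k2.symm
    have hpos : 0 < nval t := by
      obtain ⟨⟨x, x'⟩, -⟩ := hS.2.1 (diagRel X) hS.2.2.1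
      exact Nat.pos_of_ne_zero (as14_nval_ne hS (hTS htT) x)
    exact Nat.eq_of_mul_eq_mul_left hpos hk
  intro u hu v hv w hw
  by_cases hut : u ∈ T <;> by_cases hvt : v ∈ T <;> by_cases hwt : w ∈ T
  · have eu : extOf T ι u = ι u := if_pos hut
    have ev : extOf T ι v = ι v := if_pos hvt
    have ew : extOf T ι w = ι w := if_pos hwt
    rw [eu, ev, ew]
    exact hautT u hut v hvt w hwt
  · have eu : extOf T ι u = ι u := if_pos hut
    have ev : extOf T ι v = ι v := if_pos hvt
    have ew : extOf T ι w = w := if_neg hwt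
    rw [eu, ev, ew, as14_zero1 hS hTcl hut hvt hw hwt,
      as14_zero1 hS hTcl (hmap u hut) (hmap v hvt) hw hwt]
  · have eu : extOf T ι u = ι u := if_pos hut
    have ev : extOf T ι v = v := if_neg hvt
    have ew : extOf T ι w = ι w := if_pos hwt
    rw [eu, ev, ew, as14_zero2 hS hTcl hut hv hvt hwt,
      as14_zero2 hS hTcl (hmap u hut) hv hvt (hmap w hwt)]
  · have eu : extOf T ι u = ι u := if_pos hut
    have ev : extOf T ι v = v := if_neg hvt
    have ew : extOf T ι w = w := if_neg hwt
    rw [eu, ev, ew]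
    by_cases huH : u ∈ H
    · rw [hfix u huH]
    · exact caseA u hut huH v hv hvt w hw
  · have eu : extOf T ι u = u := if_neg hut
    have ev : extOf T ι v = ι v := if_pos hvt
    have ew : extOf T ι w = ι w := if_pos hwt
    rw [eu, ev, ew, as14_zero3 hS hTcl hu hut hvt hwt,
      as14_zero3 hS hTcl hu hut (hmap v hvt) (hmap w hwt)]
  · have eu : extOf T ι u = u := if_neg hut
    have ev : extOf T ι v = ι v := if_pos hvt
    have ew : extOf T ι w = w := if_neg hwt
    rw [eu, ev, ew]
    by_cases hvH : v ∈ H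
    · rw [hfix v hvH]
    · exact caseB u hu hut v hvt hvH w hw
  · have eu : extOf T ι u = u := if_neg hut
    have ev : extOf T ι v = v := if_neg hvt
    have ew : extOf T ι w = ι w := if_pos hwt
    rw [eu, ev, ew]
    by_cases hwH : w ∈ H
    · rw [hfix w hwH]
    · exact caseC u hu hut v hv hvt w hwt hwH
  · have eu : extOf T ι u = u := if_neg hut
    have ev : extOf T ι v = v := if_neg hvt
    have ew : extOf T ι w = w := if_neg hwt
    rw [eu, ev, ew]
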